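/- Under consistency, sequential ignorability and positivity, for each e ∈ {0,1} the counterfactual mean E[Y_{e,M_e}] is identified by the g-formula: E[Y_{e,M_e}] = δ_e := Σ_{x, P(X=x)>0} E(Y | E=e, X=x)·P(X=x) = Σ_{m∈𝒮, x∈𝒳, P(X=x)>0} E(Y | E=e, M=m, X=x)·P(M=m | E=e, X=x)·P(X=x). -/

import Mathlib

open MeasureTheory ProbabilityTheory

/-- Conditional probability of `B` given the event `A`: `P(B ∩ A) / P(A)`. -/
noncomputable def cP {Ω : Type*} [MeasurableSpace Ω] (μ : Measure Ω) (B A : Set Ω) : ℝ :=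
  (μ (B ∩ A)).toReal / (μ A).toReal

/-- Conditional expectation of `Y` given the event `A`: `E[Y·1_A] / P(A)`. -/
noncomputable def cE {Ω : Type*} [MeasurableSpace Ω] (μ : Measure Ω) (Y : Ω → ℝ) (A : Set Ω) : ℝ :=
  (∫ ω in A, Y ω ∂μ) / (μ A).toReal


lemma g_eq_sum {Ω 𝒮 : Type*} [Fintype 𝒮] [DecidableEq 𝒮]
    (Yc : 𝒮 → Ω → ℝ) (Mc : Ω → 𝒮) :
    (fun ω => Yc (Mc ω) ω) = fun ω => ∑ m : 𝒮, (Mc ⁻¹' {m}).indicator (Yc m) ω := by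
  funext ω
  rw [Finset.sum_eq_single (Mc ω)]
  · simp [Set.indicator_of_mem, Set.mem_preimage]
  · intro m _ hm
    apply Set.indicator_of_notMem
    simp only [Set.mem_preimage, Set.mem_singleton_iff]
    exact fun h => hm h.symm
  · simp

lemma key_x {Ω 𝒮 : Type*} [MeasurableSpace Ω] [Fintype 𝒮] [MeasurableSpace 𝒮]
    [MeasurableSingletonClass 𝒮]
    (μ : Measure Ω) [IsProbabilityMeasure μ]
    (E : Ω → Bool) (Y : Ω → ℝ)
    (hE : Measurable E) (hY : Integrable Y μ)
    (Yc : 𝒮 → Ω → ℝ) (Mc : Ω → 𝒮)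
    (hYc : ∀ m, Integrable (Yc m) μ) (hMc : Measurable Mc)
    (e : Bool) (A : Set Ω) (hA : MeasurableSet A) (hA0 : μ A ≠ 0)
    (hEA : μ (E ⁻¹' {e} ∩ A) ≠ 0)
    (hcons : ∀ᵐ ω ∂μ, E ω = e → Yc (Mc ω) ω = Y ω)
    (hSI : IndepFun (fun ω => ((fun m => Yc m ω), Mc ω)) E (μ[|A])) :
    ∫ ω in A, Yc (Mc ω) ω ∂μ =
      ((∫ ω in E ⁻¹' {e} ∩ A, Y ω ∂μ) / (μ (E ⁻¹' {e} ∩ A)).toReal) * (μ A).toReal := by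
  classical
  set ν := μ[|A] with hν
  have hcondsmul : ν = (μ A)⁻¹ • μ.restrict A := rfl
  set g : Ω → ℝ := fun ω => Yc (Mc ω) ω with hg
  set h : Ω → ℝ := fun ω => if E ω = e then (1:ℝ) else 0 with hh
  have hgint : Integrable g μ := by
    rw [hg, g_eq_sum]
    exact integrable_finset_sum _ fun m _ =>
      (hYc m).indicator (hMc (measurableSet_singleton m))
  have hac : ν ≪ μ := cond_absolutelyContinuous
  have hgaem : AEStronglyMeasurable g ν := hgint.aestronglyMeasurable.mono_ac hac
  -- independence of g and h
  have hφ : Measurable (fun p : (𝒮 → ℝ) × 𝒮 => p.1 p.2) := by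
    have : (fun p : (𝒮 → ℝ) × 𝒮 => p.1 p.2)
        = fun p => ∑ m : 𝒮, if p.2 = m then p.1 m else 0 := by
      funext p; rw [Finset.sum_eq_single p.2]
      · simp
      · intro b _ hb; simp only [ite_eq_right_iff]; exact fun h => absurd h.symm hb
      · simp
    rw [this]
    exact Finset.measurable_sum _ fun m _ =>
      Measurable.ite (measurable_snd (measurableSet_singleton m))
        ((measurable_pi_apply m).comp measurable_fst) measurable_const
  have hψ : Measurable (fun b : Bool => if b = e then (1:ℝ) else 0) := measurable_from_top
  have hind : IndepFun g h ν := hSI.comp hφ hψ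
  have hmul : ∫ ω, (g * h) ω ∂ν = (∫ ω, g ω ∂ν) * ∫ ω, h ω ∂ν :=
    hind.integral_mul_eq_mul_integral hgaem (hψ.comp hE).aestronglyMeasurable
  -- notation
  set a : ℝ := (μ A).toReal with ha
  set b : ℝ := (μ (E ⁻¹' {e} ∩ A)).toReal with hb
  set I : ℝ := ∫ ω in E ⁻¹' {e} ∩ A, Y ω ∂μ with hI
  have ha0 : a ≠ 0 := by
    simp only [ha, ENNReal.toReal_ne_zero]; exact ⟨hA0, measure_ne_top μ A⟩
  have hb0 : b ≠ 0 := by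
    simp only [hb, ENNReal.toReal_ne_zero]; exact ⟨hEA, measure_ne_top μ _⟩
  -- compute ∫ h dν
  have hEm : MeasurableSet (E ⁻¹' {e}) := hE (measurableSet_singleton e)
  have hhind : h = (E ⁻¹' {e}).indicator (1 : Ω → ℝ) := by
    funext ω; by_cases hω : E ω = e <;> simp [hh, hω, Set.indicator, Set.mem_preimage]
  have hinth : ∫ ω, h ω ∂ν = a⁻¹ * b := by
    rw [hhind, integral_indicator_one hEm, measureReal_def, hν, cond_apply hA, ENNReal.toReal_mul,
      ENNReal.toReal_inv, Set.inter_comm A]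
  -- g * h = indicator of g
  have hgh : g * h = (E ⁻¹' {e}).indicator g := by
    funext ω; by_cases hω : E ω = e <;>
      simp [hh, hω, Set.indicator, Set.mem_preimage]
  have hres : ν.restrict (E ⁻¹' {e}) = (μ A)⁻¹ • μ.restrict (E ⁻¹' {e} ∩ A) := by
    rw [hcondsmul, Measure.restrict_smul, Measure.restrict_restrict hEm]
  have hcons' : ∀ᵐ ω ∂ν, E ω = e → g ω = Y ω := hac.ae_le hcons
  have hIgh : ∫ ω, (g * h) ω ∂ν = a⁻¹ * I := by
    rw [hgh, integral_indicator hEm,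
      setIntegral_congr_ae hEm (hcons'.mono fun ω hω hmem => hω (by simpa using hmem))]
    show ∫ ω, Y ω ∂(ν.restrict (E ⁻¹' {e})) = a⁻¹ * I
    rw [hres, integral_smul_measure, ENNReal.toReal_inv, smul_eq_mul]
  -- ∫ g over A
  have hAg : ∫ ω in A, g ω ∂μ = a * ∫ ω, g ω ∂ν := by
    rw [hcondsmul, integral_smul_measure, ENNReal.toReal_inv, smul_eq_mul, ← mul_assoc,
      mul_inv_cancel₀ ha0, one_mul]
  -- conclude
  have hJ : ∫ ω, g ω ∂ν = I / b := by
    have h1 : a⁻¹ * I = (∫ ω, g ω ∂ν) * (a⁻¹ * b) := by rw [← hinth, ← hIgh, hmul]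
    field_simp at h1 ⊢
    linarith [h1]
  rw [hg] at hAg ⊢
  rw [hAg, hJ]
  field_simp

open Classical in
theorem g_formula_identification
    {Ω 𝒳 𝒮 : Type*} [MeasurableSpace Ω] [Fintype 𝒳] [Fintype 𝒮]
    [MeasurableSpace 𝒳] [MeasurableSingletonClass 𝒳]
    [MeasurableSpace 𝒮] [MeasurableSingletonClass 𝒮]
    (μ : Measure Ω) [IsProbabilityMeasure μ]
    (X : Ω → 𝒳) (M : Ω → 𝒮) (E : Ω → Bool) (Y : Ω → ℝ)
    (hX : Measurable X) (hM : Measurable M) (hE : Measurable E)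
    (hY : Integrable Y μ)
    -- counterfactuals: `Yc e m = Y_{e,m}` and `Mc e = M_e`
    (Yc : Bool → 𝒮 → Ω → ℝ) (Mc : Bool → Ω → 𝒮)
    (hYc : ∀ e m, Integrable (Yc e m) μ) (hMc : ∀ e, Measurable (Mc e))
    -- positivity
    (hposE : ∀ (e : Bool) (x : 𝒳), μ (X ⁻¹' {x}) ≠ 0 → μ (E ⁻¹' {e} ∩ X ⁻¹' {x}) ≠ 0)
    (hposM : ∀ (m : 𝒮) (e : Bool) (x : 𝒳), μ (X ⁻¹' {x}) ≠ 0 →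
      μ (M ⁻¹' {m} ∩ E ⁻¹' {e} ∩ X ⁻¹' {x}) ≠ 0)
    -- consistency
    (hconsM : ∀ e : Bool, ∀ᵐ ω ∂μ, E ω = e → Mc e ω = M ω)
    (hconsY : ∀ (e : Bool) (m : 𝒮), ∀ᵐ ω ∂μ, E ω = e → M ω = m → Yc e m ω = Y ω)
    -- sequential ignorability (i): ((Y_{e',m'})_{m'}, M_e) ⫫ E | X
    (hSI1 : ∀ (e e' : Bool) (x : 𝒳), μ (X ⁻¹' {x}) ≠ 0 →
      IndepFun (fun ω => ((fun m => Yc e' m ω), Mc e ω)) E (μ[|X ⁻¹' {x}]))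
    -- sequential ignorability (ii): Y_{e',m} ⫫ M | (E, X)
    (hSI2 : ∀ (e' e : Bool) (m : 𝒮) (x : 𝒳), μ (X ⁻¹' {x}) ≠ 0 →
      IndepFun (Yc e' m) M (μ[|E ⁻¹' {e} ∩ X ⁻¹' {x}])) :
    ∀ e : Bool,
      (∫ ω, Yc e (Mc e ω) ω ∂μ =
        ∑ x ∈ Finset.univ.filter (fun x => μ (X ⁻¹' {x}) ≠ 0),
          cE μ Y (E ⁻¹' {e} ∩ X ⁻¹' {x}) * (μ (X ⁻¹' {x})).toReal) ∧
      (∑ x ∈ Finset.univ.filter (fun x => μ (X ⁻¹' {x}) ≠ 0),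
          cE μ Y (E ⁻¹' {e} ∩ X ⁻¹' {x}) * (μ (X ⁻¹' {x})).toReal =
        ∑ m : 𝒮, ∑ x ∈ Finset.univ.filter (fun x => μ (X ⁻¹' {x}) ≠ 0),
          cE μ Y (E ⁻¹' {e} ∩ M ⁻¹' {m} ∩ X ⁻¹' {x}) *
            cP μ (M ⁻¹' {m}) (E ⁻¹' {e} ∩ X ⁻¹' {x}) *
            (μ (X ⁻¹' {x})).toReal) := by
  intro e
  have hXm : ∀ x : 𝒳, MeasurableSet (X ⁻¹' {x}) := fun x => hX (measurableSet_singleton x)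
  have hEm : MeasurableSet (E ⁻¹' {e}) := hE (measurableSet_singleton e)
  have hMm : ∀ m : 𝒮, MeasurableSet (M ⁻¹' {m}) := fun m => hM (measurableSet_singleton m)
  have hc : ∀ᵐ ω ∂μ, E ω = e → Yc e (Mc e ω) ω = Y ω := by
    filter_upwards [hconsM e, ae_all_iff.2 (fun m => hconsY e m)] with ω h1 h2 he
    rw [h1 he]; exact h2 (M ω) he rfl
  have hgint : Integrable (fun ω => Yc e (Mc e ω) ω) μ := by
    rw [g_eq_sum]
    exact integrable_finset_sum _ fun m _ =>
      ((hYc e m).indicator ((hMc e) (measurableSet_singleton m)))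
  constructor
  · -- part 1
    have hunion : (⋃ x ∈ (Finset.univ : Finset 𝒳), X ⁻¹' {x}) = Set.univ := by
      ext ω; simp
    have hsplit : ∫ ω, Yc e (Mc e ω) ω ∂μ
        = ∑ x : 𝒳, ∫ ω in X ⁻¹' {x}, Yc e (Mc e ω) ω ∂μ := by
      rw [← setIntegral_univ, ← hunion, integral_biUnion_finset]
      · exact fun x _ => hXm x
      · intro x _ y _ hxy
        exact Set.disjoint_left.2 fun ω h1 h2 => hxy (by
          simp only [Set.mem_preimage, Set.mem_singleton_iff] at h1 h2
          rw [← h1, ← h2])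
      · exact fun x _ => hgint.integrableOn
    have hzero : ∀ x ∈ (Finset.univ : Finset 𝒳),
        x ∉ Finset.univ.filter (fun x => μ (X ⁻¹' {x}) ≠ 0) →
        ∫ ω in X ⁻¹' {x}, Yc e (Mc e ω) ω ∂μ = 0 := by
      intro x _ hx
      simp only [Finset.mem_filter, Finset.mem_univ, true_and, not_not] at hx
      rw [Measure.restrict_eq_zero.2 hx, integral_zero_measure]
    rw [hsplit, ← Finset.sum_subset (Finset.filter_subset _ Finset.univ) hzero]
    refine Finset.sum_congr rfl fun x hx => ?_
    simp only [Finset.mem_filter, Finset.mem_univ, true_and] at hx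
    simpa [cE, div_eq_mul_inv] using
      key_x μ E Y hE hY (Yc e) (Mc e) (hYc e) (hMc e) e (X ⁻¹' {x}) (hXm x) hx
        (hposE e x hx) hc (hSI1 e e x hx)
  · -- part 2
    rw [Finset.sum_comm]
    refine Finset.sum_congr rfl fun x hx => ?_
    simp only [Finset.mem_filter, Finset.mem_univ, true_and] at hx
    rw [← Finset.sum_mul]
    congr 1
    set b : ℝ := (μ (E ⁻¹' {e} ∩ X ⁻¹' {x})).toReal with hbdef
    have hb0 : b ≠ 0 := by
      simp only [hbdef, ENNReal.toReal_ne_zero]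
      exact ⟨hposE e x hx, measure_ne_top μ _⟩
    have hcne : ∀ m : 𝒮, (μ (E ⁻¹' {e} ∩ M ⁻¹' {m} ∩ X ⁻¹' {x})).toReal ≠ 0 := by
      intro m
      have hset : M ⁻¹' {m} ∩ E ⁻¹' {e} ∩ X ⁻¹' {x}
          = E ⁻¹' {e} ∩ M ⁻¹' {m} ∩ X ⁻¹' {x} := by
        rw [Set.inter_comm (M ⁻¹' {m}) (E ⁻¹' {e})]
      rw [← hset]
      simp only [ENNReal.toReal_ne_zero]
      exact ⟨hposM m e x hx, measure_ne_top μ _⟩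
    have hterm : ∀ m : 𝒮,
        cE μ Y (E ⁻¹' {e} ∩ M ⁻¹' {m} ∩ X ⁻¹' {x}) *
          cP μ (M ⁻¹' {m}) (E ⁻¹' {e} ∩ X ⁻¹' {x})
        = (∫ ω in E ⁻¹' {e} ∩ M ⁻¹' {m} ∩ X ⁻¹' {x}, Y ω ∂μ) / b := by
      intro m
      have hset : M ⁻¹' {m} ∩ (E ⁻¹' {e} ∩ X ⁻¹' {x})
          = E ⁻¹' {e} ∩ M ⁻¹' {m} ∩ X ⁻¹' {x} := by
        ext ω; constructor
        · rintro ⟨h1, h2, h3⟩; exact ⟨⟨h2, h1⟩, h3⟩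
        · rintro ⟨⟨h2, h1⟩, h3⟩; exact ⟨h1, h2, h3⟩
      rw [cE, cP, hset, div_mul_div_comm,
        mul_comm (∫ ω in E ⁻¹' {e} ∩ M ⁻¹' {m} ∩ X ⁻¹' {x}, Y ω ∂μ)
          (μ (E ⁻¹' {e} ∩ M ⁻¹' {m} ∩ X ⁻¹' {x})).toReal,
        mul_div_mul_left _ _ (hcne m)]
    rw [Finset.sum_congr rfl fun m _ => hterm m, ← Finset.sum_div]
    have hsplit2 : ∫ ω in E ⁻¹' {e} ∩ X ⁻¹' {x}, Y ω ∂μ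
        = ∑ m : 𝒮, ∫ ω in E ⁻¹' {e} ∩ M ⁻¹' {m} ∩ X ⁻¹' {x}, Y ω ∂μ := by
      have hunion2 : (⋃ m ∈ (Finset.univ : Finset 𝒮),
          E ⁻¹' {e} ∩ M ⁻¹' {m} ∩ X ⁻¹' {x}) = E ⁻¹' {e} ∩ X ⁻¹' {x} := by
        ext ω
        simp only [Set.mem_iUnion, Set.mem_inter_iff, Set.mem_preimage,
          Set.mem_singleton_iff, Finset.mem_univ, exists_and_left,
          exists_and_right, exists_eq']
        tauto
      rw [← hunion2, integral_biUnion_finset]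
      · exact fun m _ => ((hEm.inter (hMm m)).inter (hXm x))
      · intro m _ m' _ hmm
        exact Set.disjoint_left.2 fun ω h1 h2 => hmm (by
          have e1 := h1.1.2; have e2 := h2.1.2
          simp only [Set.mem_preimage, Set.mem_singleton_iff] at e1 e2
          rw [← e1, ← e2])
      · exact fun m _ => hY.integrableOn
    rw [cE, hsplit2]
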